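/- Let 𝔡 = 𝔡₁ × 𝔡₀ where (𝔡ᵢ, 𝔤ᵢ, 𝔥ᵢ)_{βᵢ} are Dirac Manin triples, and let 𝔨 ⊆ 𝔡₁ × 𝔡₀ be a (β₁ − β₀)-coisotropic Lie subalgebra with 𝔤₁ = 𝔨 ∘ 𝔤₀ and 𝔥₀ = 𝔥₁ ∘ 𝔨 (compositions of linear relations). Then ker(𝔨) ⊆ 𝔥₀, hence 𝔤₀ ∩ ker(𝔨) = 0; there exist unique linear maps ψ : 𝔤₁ → 𝔤₀ and φ : 𝔥₀ → 𝔥₁ with (ξ₁, ψ(ξ₁)) ∈ 𝔨 for all ξ₁ ∈ 𝔤₁ and (φ(ν₀), ν₀) ∈ 𝔨 for all ν₀ ∈ 𝔥₀; and 𝔨 is the direct sum of the graphs of ψ and φ: 𝔨 = {(ξ₁ + φ(ν₀), ψ(ξ₁) + ν₀) : ξ₁ ∈ 𝔤₁, ν₀ ∈ 𝔥₀}. In particular dim 𝔨 = dim 𝔤₁ + dim(𝔡₀/𝔤₀). -/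
import Mathlib


open Module

/-- Let `𝔡ᵢ = 𝔤ᵢ ⊕ 𝔥ᵢ` be finite-dimensional vector spaces with direct sum
decompositions, and `𝔨 ⊆ 𝔡₁ × 𝔡₀` a subspace with `𝔤₁ = 𝔨 ∘ 𝔤₀` and
`𝔥₀ = 𝔥₁ ∘ 𝔨` (compositions of linear relations).  Then `ker(𝔨) ⊆ 𝔥₀`, hence
`𝔤₀ ∩ ker(𝔨) = 0`; there are unique maps `ψ : 𝔤₁ → 𝔤₀` and `φ : 𝔥₀ → 𝔥₁` with
`(ξ₁, ψ(ξ₁)) ∈ 𝔨` and `(φ(ν₀), ν₀) ∈ 𝔨`; and `𝔨` is the direct sum of the graphs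
of `ψ` and `φ`.  In particular `dim 𝔨 = dim 𝔤₁ + dim(𝔡₀/𝔤₀)`. -/
theorem morphism_structure {K D₀ D₁ : Type*} [Field K]
    [AddCommGroup D₀] [Module K D₀] [FiniteDimensional K D₀]
    [AddCommGroup D₁] [Module K D₁] [FiniteDimensional K D₁]
    (G₀ H₀ : Submodule K D₀) (G₁ H₁ : Submodule K D₁)
    (hdisj₀ : G₀ ⊓ H₀ = ⊥) (hspan₀ : G₀ ⊔ H₀ = ⊤)
    (hdisj₁ : G₁ ⊓ H₁ = ⊥) (hspan₁ : G₁ ⊔ H₁ = ⊤)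
    (k : Submodule K (D₁ × D₀))
    (hG : ∀ x₁ : D₁, x₁ ∈ G₁ ↔ ∃ x₀ ∈ G₀, (x₁, x₀) ∈ k)
    (hH : ∀ x₀ : D₀, x₀ ∈ H₀ ↔ ∃ x₁ ∈ H₁, (x₁, x₀) ∈ k) :
    -- ker(𝔨) ⊆ 𝔥₀
    (∀ x₀ : D₀, ((0 : D₁), x₀) ∈ k → x₀ ∈ H₀) ∧
    -- 𝔤₀ ∩ ker(𝔨) = 0
    (∀ x₀ ∈ G₀, ((0 : D₁), x₀) ∈ k → x₀ = 0) ∧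
    -- existence and uniqueness of ψ
    (∀ ξ₁ ∈ G₁, ∃! ξ₀ : D₀, ξ₀ ∈ G₀ ∧ (ξ₁, ξ₀) ∈ k) ∧
    -- existence and uniqueness of φ
    (∀ ν₀ ∈ H₀, ∃! ν₁ : D₁, ν₁ ∈ H₁ ∧ (ν₁, ν₀) ∈ k) ∧
    -- 𝔨 is the direct sum of the graphs of ψ and φ
    (∀ x ∈ k, ∃ ξ₁ ∈ G₁, ∃ ξ₀ ∈ G₀, ∃ ν₁ ∈ H₁, ∃ ν₀ ∈ H₀,
      (ξ₁, ξ₀) ∈ k ∧ (ν₁, ν₀) ∈ k ∧ x = (ξ₁ + ν₁, ξ₀ + ν₀)) ∧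
    -- the dimension formula
    (finrank K ↥k = finrank K ↥G₁ + finrank K (D₀ ⧸ G₀)) := by

  have hker : ∀ x₀ : D₀, ((0 : D₁), x₀) ∈ k → x₀ ∈ H₀ := fun x₀ hx =>
    (hH x₀).mpr ⟨0, H₁.zero_mem, hx⟩
  have hker0 : ∀ x₀ ∈ G₀, ((0 : D₁), x₀) ∈ k → x₀ = 0 := by
    intro x₀ hg hx
    have hm : x₀ ∈ G₀ ⊓ H₀ := ⟨hg, hker x₀ hx⟩
    simpa [hdisj₀] using hm
  have hker1 : ∀ x₁ ∈ H₁, (x₁, (0 : D₀)) ∈ k → x₁ = 0 := by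
    intro x₁ hh hx
    have hg : x₁ ∈ G₁ := (hG x₁).mpr ⟨0, G₀.zero_mem, hx⟩
    have hm : x₁ ∈ G₁ ⊓ H₁ := ⟨hg, hh⟩
    simpa [hdisj₁] using hm
  have hψ : ∀ ξ₁ ∈ G₁, ∃! ξ₀ : D₀, ξ₀ ∈ G₀ ∧ (ξ₁, ξ₀) ∈ k := by
    intro ξ₁ hξ
    obtain ⟨ξ₀, hξ₀, hk₀⟩ := (hG ξ₁).mp hξ
    refine ⟨ξ₀, ⟨hξ₀, hk₀⟩, ?_⟩
    rintro y ⟨hy, hyk⟩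
    have hsub : ((0 : D₁), y - ξ₀) ∈ k := by
      have := k.sub_mem hyk hk₀
      simpa [Prod.ext_iff] using this
    have := hker0 _ (G₀.sub_mem hy hξ₀) hsub
    exact sub_eq_zero.mp this
  have hφ : ∀ ν₀ ∈ H₀, ∃! ν₁ : D₁, ν₁ ∈ H₁ ∧ (ν₁, ν₀) ∈ k := by
    intro ν₀ hν
    obtain ⟨ν₁, hν₁, hk₁⟩ := (hH ν₀).mp hν
    refine ⟨ν₁, ⟨hν₁, hk₁⟩, ?_⟩
    rintro y ⟨hy, hyk⟩
    have hsub : (y - ν₁, (0 : D₀)) ∈ k := by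
      have := k.sub_mem hyk hk₁
      simpa [Prod.ext_iff] using this
    have := hker1 _ (H₁.sub_mem hy hν₁) hsub
    exact sub_eq_zero.mp this
  have hdecomp : ∀ x ∈ k, ∃ ξ₁ ∈ G₁, ∃ ξ₀ ∈ G₀, ∃ ν₁ ∈ H₁, ∃ ν₀ ∈ H₀,
      (ξ₁, ξ₀) ∈ k ∧ (ν₁, ν₀) ∈ k ∧ x = (ξ₁ + ν₁, ξ₀ + ν₀) := by
    intro x hx
    have hx0 : x.2 ∈ G₀ ⊔ H₀ := hspan₀ ▸ Submodule.mem_top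
    obtain ⟨ξ₀, hξ₀, ν₀, hν₀, hsum⟩ := Submodule.mem_sup.mp hx0
    obtain ⟨ν₁, ⟨hν₁, hkν⟩, -⟩ := hφ ν₀ hν₀
    have hkξ : (x.1 - ν₁, ξ₀) ∈ k := by
      have h' : (x.1 - ν₁, x.2 - ν₀) ∈ k := k.sub_mem hx hkν
      have h2 : x.2 - ν₀ = ξ₀ := by rw [← hsum]; abel
      rwa [h2] at h' 
    have hξ₁ : x.1 - ν₁ ∈ G₁ := (hG _).mpr ⟨ξ₀, hξ₀, hkξ⟩
    exact ⟨x.1 - ν₁, hξ₁, ξ₀, hξ₀, ν₁, hν₁, ν₀, hν₀, hkξ, hkν,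
      by rw [Prod.ext_iff]; constructor <;> simp [← hsum]⟩
  refine ⟨hker, hker0, hψ, hφ, hdecomp, ?_⟩
  -- dimension count
  have hcompl₁ : IsCompl G₁ H₁ := ⟨disjoint_iff.mpr hdisj₁, codisjoint_iff.mpr hspan₁⟩
  let F : k →ₗ[K] (D₁ ⧸ H₁) × (D₀ ⧸ G₀) :=
    LinearMap.prod (H₁.mkQ ∘ₗ (LinearMap.fst K D₁ D₀) ∘ₗ k.subtype)
      (G₀.mkQ ∘ₗ (LinearMap.snd K D₁ D₀) ∘ₗ k.subtype)
  have hinj : Function.Injective F := by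
    rw [← LinearMap.ker_eq_bot]
    rw [Submodule.eq_bot_iff]
    rintro ⟨x, hx⟩ hFx
    have h1 : x.1 ∈ H₁ := by
      have := congrArg Prod.fst hFx
      simpa [F, Submodule.Quotient.mk_eq_zero] using this
    have h2 : x.2 ∈ G₀ := by
      have := congrArg Prod.snd hFx
      simpa [F, Submodule.Quotient.mk_eq_zero] using this
    have hg1 : x.1 ∈ G₁ := (hG x.1).mpr ⟨x.2, h2, by simpa using hx⟩
    have hx1 : x.1 = 0 := by
      have hm : x.1 ∈ G₁ ⊓ H₁ := ⟨hg1, h1⟩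
      simpa [hdisj₁] using hm
    have hx2 : x.2 = 0 := hker0 x.2 h2 (by rw [← hx1]; exact hx)
    ext <;> simp [hx1, hx2]
  have hsurj : Function.Surjective F := by
    rintro ⟨a, b⟩
    obtain ⟨y₁, rfl⟩ := Submodule.Quotient.mk_surjective H₁ a
    obtain ⟨y₀, rfl⟩ := Submodule.Quotient.mk_surjective G₀ b
    have hy₁ : y₁ ∈ G₁ ⊔ H₁ := hspan₁ ▸ Submodule.mem_top
    obtain ⟨g₁, hg₁, h₁, hh₁, hsum₁⟩ := Submodule.mem_sup.mp hy₁
    have hy₀ : y₀ ∈ G₀ ⊔ H₀ := hspan₀ ▸ Submodule.mem_top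
    obtain ⟨g₀, hg₀, h₀, hh₀, hsum₀⟩ := Submodule.mem_sup.mp hy₀
    obtain ⟨ψg, ⟨hψg, hkψ⟩, -⟩ := hψ g₁ hg₁
    obtain ⟨φh, ⟨hφh, hkφ⟩, -⟩ := hφ h₀ hh₀
    refine ⟨⟨(g₁ + φh, ψg + h₀), ?_⟩, ?_⟩
    · have := k.add_mem hkψ hkφ
      simpa using this
    · ext
      · show Submodule.Quotient.mk (g₁ + φh) = Submodule.Quotient.mk y₁
        rw [Submodule.Quotient.eq]
        have : g₁ + φh - y₁ = φh - h₁ := by rw [← hsum₁]; abel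
        rw [this]; exact H₁.sub_mem hφh hh₁
      · show Submodule.Quotient.mk (ψg + h₀) = Submodule.Quotient.mk y₀
        rw [Submodule.Quotient.eq]
        have : ψg + h₀ - y₀ = ψg - g₀ := by rw [← hsum₀]; abel
        rw [this]; exact G₀.sub_mem hψg hg₀
  have e : k ≃ₗ[K] (D₁ ⧸ H₁) × (D₀ ⧸ G₀) := LinearEquiv.ofBijective F ⟨hinj, hsurj⟩
  have e₁ : (D₁ ⧸ H₁) ≃ₗ[K] G₁ := Submodule.quotientEquivOfIsCompl H₁ G₁ hcompl₁.symm
  rw [e.finrank_eq, Module.finrank_prod, e₁.finrank_eq]
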